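/- Let n ≥ 1 and let E be a weakly connected digraph on Fin N such that every maximal strong component of E has more than n + 1 elements. Let x : Fin N → EuclideanSpace ℝ (Fin n) be a configuration such that for every maximal strong component C of E, affineSpan ℝ (x '' C) = ⊤, and let X : Matrix (Fin N) (Fin n) ℝ be the matrix with entries X i k = x i k. Then Submodule.span ℝ {M | ∃ i j, Relation.TransGen E i j ∧ M = A i j * X} = ⊤, i.e. these matrices span all of Matrix (Fin N) (Fin n) ℝ (a space of dimension n·N). -/

import Mathlib

/-- `C` is a maximal strong component of the digraph `E` on `Fin N`:
it is the strong component of one of its vertices and is closed under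
outgoing edges. -/
def IsMaxSCC {N : ℕ} (E : Fin N → Fin N → Prop) (C : Set (Fin N)) : Prop :=
  (∃ v ∈ C, C = {w | Relation.ReflTransGen E v w ∧ Relation.ReflTransGen E w v}) ∧
  (∀ u ∈ C, ∀ w : Fin N, E u w → w ∈ C)

/-- The negative of the Laplacian of the single-edge digraph `i → j`. -/
def edgeMatrix {N : ℕ} (i j : Fin N) : Matrix (Fin N) (Fin N) ℝ :=
  Matrix.single i j 1 - Matrix.single i i 1

/-- The matrix whose `i`-th row is the point `x i`. -/
def configMatrix {N n : ℕ} (x : Fin N → EuclideanSpace ℝ (Fin n)) :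
    Matrix (Fin N) (Fin n) ℝ :=
  Matrix.of fun i k => x i k

/-- Every vertex reaches a sink strongly connected component. -/
lemma exists_sink {N : ℕ} (E : Fin N → Fin N → Prop) (i : Fin N) :
    ∃ v, Relation.ReflTransGen E i v ∧
      IsMaxSCC E {w | Relation.ReflTransGen E v w ∧ Relation.ReflTransGen E w v} := by
  set R : Fin N → Set (Fin N) := fun v => {w | Relation.ReflTransGen E v w} with hR
  obtain ⟨v, hv, hmin⟩ := Set.exists_min_image {v | Relation.ReflTransGen E i v}
      (fun v => (R v).ncard) (Set.toFinite _) ⟨i, Relation.ReflTransGen.refl⟩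
  refine ⟨v, hv, ⟨⟨v, ⟨.refl, .refl⟩, rfl⟩, ?_⟩⟩
  rintro u ⟨hvu, huv⟩ w hew
  have hvw : Relation.ReflTransGen E v w := hvu.tail hew
  have hiw : Relation.ReflTransGen E i w := hv.trans hvw
  have hsub : R w ⊆ R v := fun z hz => hvw.trans hz
  have heq : R w = R v := Set.eq_of_subset_of_ncard_le hsub (hmin w hiw) (Set.toFinite _)
  have hwv : v ∈ R w := heq.symm ▸ (Relation.ReflTransGen.refl : v ∈ R v)
  exact ⟨hvw, hwv⟩

lemma edge_mul {N n : ℕ} (x : Fin N → EuclideanSpace ℝ (Fin n)) (i j : Fin N) :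
    edgeMatrix i j * configMatrix x
      = Matrix.of (Pi.single i (fun k => x j k - x i k)) := by
  ext a b
  simp only [edgeMatrix, Matrix.sub_mul, Matrix.sub_apply, Matrix.mul_apply,
    Matrix.single, Matrix.of_apply, configMatrix, Pi.single_apply]
  by_cases ha : a = i
  · subst ha
    simp [sub_mul, Finset.sum_sub_distrib, ite_mul, Finset.sum_ite_eq]
  · simp [Ne.symm ha, ha]

theorem lie_algebra_rank_condition {N n : ℕ} (hn : 1 ≤ n)
    (E : Fin N → Fin N → Prop)
    (hwc : ∀ i j : Fin N, Relation.ReflTransGen (fun a b => E a b ∨ E b a) i j)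
    (hbig : ∀ C : Set (Fin N), IsMaxSCC E C → n + 1 < C.ncard)
    (x : Fin N → EuclideanSpace ℝ (Fin n))
    (hx : ∀ C : Set (Fin N), IsMaxSCC E C → affineSpan ℝ (x '' C) = ⊤) :
    Submodule.span ℝ
      {M : Matrix (Fin N) (Fin n) ℝ |
        ∃ i j, Relation.TransGen E i j ∧ M = edgeMatrix i j * configMatrix x} = ⊤ := by
  set S := Submodule.span ℝ
      {M : Matrix (Fin N) (Fin n) ℝ |
        ∃ i j, Relation.TransGen E i j ∧ M = edgeMatrix i j * configMatrix x} with hS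
  have key : ∀ i : Fin N, ∀ v : Fin n → ℝ,
      (Matrix.of (Pi.single i v) : Matrix (Fin N) (Fin n) ℝ) ∈ S := by
    intro i
    obtain ⟨v0, hiv0, hC⟩ := exists_sink E i
    set C : Set (Fin N) :=
      {w | Relation.ReflTransGen E v0 w ∧ Relation.ReflTransGen E w v0} with hCdef
    have hC2 : 1 < C.ncard := by
      have := hbig C hC; omega
    have htrans : ∀ w ∈ C, Relation.TransGen E i w := by
      intro w hw
      have hiw : Relation.ReflTransGen E i w := hiv0.trans hw.1
      rcases Relation.reflTransGen_iff_eq_or_transGen.mp hiw with h | h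
      · subst h
        obtain ⟨u, hu, hune⟩ := Set.exists_ne_of_one_lt_ncard hC2 w
        have h1 : Relation.ReflTransGen E w u := hw.2.trans hu.1
        have h2 : Relation.ReflTransGen E u w := hu.2.trans hw.1
        rcases Relation.reflTransGen_iff_eq_or_transGen.mp h1 with h | h1'
        · exact absurd h.symm hune.symm
        rcases Relation.reflTransGen_iff_eq_or_transGen.mp h2 with h | h2'
        · exact absurd h hune.symm
        exact h1'.trans h2'
      · exact h
    -- the set of differences
    set T : Set (EuclideanSpace ℝ (Fin n)) :=
      {v | ∃ j, Relation.TransGen E i j ∧ v = x j - x i} with hT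
    have hTspan : Submodule.span ℝ T = ⊤ := by
      have hvs : vectorSpan ℝ (x '' C) = ⊤ :=
        AffineSubspace.vectorSpan_eq_top_of_affineSpan_eq_top ℝ _ _ (hx C hC)
      rw [eq_top_iff, ← hvs, vectorSpan_def]
      rw [Submodule.span_le]
      rintro z ⟨a, ⟨a', ha', rfl⟩, b, ⟨b', hb', rfl⟩, rfl⟩
      have h1 : x a' - x i ∈ T := ⟨a', htrans a' ha', rfl⟩
      have h2 : x b' - x i ∈ T := ⟨b', htrans b' hb', rfl⟩
      have : x a' -ᵥ x b' = (x a' - x i) - (x b' - x i) := by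
        rw [vsub_eq_sub]; abel
      show x a' -ᵥ x b' ∈ Submodule.span ℝ T
      rw [this]
      exact sub_mem (Submodule.subset_span h1) (Submodule.subset_span h2)
    -- linear map inserting a row
    let L : EuclideanSpace ℝ (Fin n) →ₗ[ℝ] Matrix (Fin N) (Fin n) ℝ :=
      { toFun := fun v => Matrix.of (Pi.single i (v : Fin n → ℝ))
        map_add' := by
          intro a b
          ext c d
          simp [Pi.single_apply]
          split <;> simp
        map_smul' := by
          intro c a
          ext e d
          simp [Pi.single_apply]
          split <;> simp }
    intro v
    have hv : (WithLp.toLp 2 v : EuclideanSpace ℝ (Fin n)) ∈ Submodule.span ℝ T := hTspan ▸ Submodule.mem_top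
    have hmap : L (WithLp.toLp 2 v) ∈ Submodule.map L (Submodule.span ℝ T) := ⟨WithLp.toLp 2 v, hv, rfl⟩
    rw [Submodule.map_span] at hmap
    refine Submodule.span_le.mpr ?_ hmap
    rintro z ⟨w, ⟨j, hj, rfl⟩, rfl⟩
    apply Submodule.subset_span
    refine ⟨i, j, hj, ?_⟩
    rw [edge_mul]
    rfl
  rw [eq_top_iff]
  intro M _
  have : M = ∑ i : Fin N, (Matrix.of (Pi.single i (M i)) : Matrix (Fin N) (Fin n) ℝ) := by
    ext a b
    rw [Matrix.sum_apply]
    simp [Pi.single_apply, apply_ite (fun f : Fin n → ℝ => f b), Finset.sum_ite_eq]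
  rw [this]
  exact Submodule.sum_mem _ fun i _ => key i (M i)
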